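/- Let N ≥ 1 and set r_N := ∑_{m≥N+1} σ_m. Then the expectation under the projection DPP satisfies E_DPP[ max_{n∈[N]} σ_n ‖Π_{T(x)^⊥} e_n^F‖_F² ] ≤ σ_1 ∑_{ℓ=1}^N (1/ℓ!²) ( N·r_N / σ_1 )^ℓ. -/

import Mathlib

open scoped RealInnerProductSpace BigOperators
open MeasureTheory

set_option maxHeartbeats 1000000
set_option synthInstance.maxHeartbeats 400000

noncomputable instance spanRangeFiniteDimensional
    {F : Type*} [NormedAddCommGroup F] [InnerProductSpace ℝ F] {ι : Type*} [Finite ι]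
    (f : ι → F) : FiniteDimensional ℝ (Submodule.span ℝ (Set.range f)) :=
  FiniteDimensional.span_of_finite ℝ (Set.finite_range f)

lemma det_updateRow_finset_sum {N : ℕ} {ι : Type*} (A : Matrix (Fin N) (Fin N) ℝ) (n : Fin N)
    (s : Finset ι) (u : ι → Fin N → ℝ) :
    (A.updateRow n (∑ j ∈ s, u j)).det = ∑ j ∈ s, (A.updateRow n (u j)).det := by
  classical
  induction s using Finset.induction_on with
  | empty =>
      simp only [Finset.sum_empty]
      exact Matrix.det_eq_zero_of_row_eq_zero n (by simp)
  | insert _ _ h ih =>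
      rw [Finset.sum_insert h, Matrix.det_updateRow_add, ih, Finset.sum_insert h]

lemma det_updateRow_eq_sum_adjugate {N : ℕ} (A : Matrix (Fin N) (Fin N) ℝ) (n : Fin N)
    (v : Fin N → ℝ) :
    (A.updateRow n v).det = ∑ j, v j * A.adjugate j n := by
  have hv : v = ∑ j, v j • (Pi.single j 1 : Fin N → ℝ) := by
    funext k
    simp [Finset.sum_apply, Pi.single_apply]
  conv_lhs => rw [hv]
  rw [det_updateRow_finset_sum]
  simp [Matrix.det_updateRow_smul, Matrix.adjugate_apply]

section Aux
variable {Y : Type*} [MeasurableSpace Y] (ω : Measure Y) [IsProbabilityMeasure ω]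
  (e : ℕ → Y → ℝ)

lemma sq_integrable (he_on : ∀ m n : ℕ, ∫ z, e m z * e n z ∂ω = if m = n then 1 else 0) (a : ℕ) :
    Integrable (fun y => e a y * e a y) ω := by
  by_contra h
  have := MeasureTheory.integral_undef h
  rw [he_on a a] at this
  simp at this

lemma mul_integrable (he_meas : ∀ m, Measurable (e m))
    (he_on : ∀ m n : ℕ, ∫ z, e m z * e n z ∂ω = if m = n then 1 else 0) (a b : ℕ) :
    Integrable (fun y => e a y * e b y) ω := by
  have ha := sq_integrable ω e he_on a
  have hb := sq_integrable ω e he_on b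
  refine ((ha.add hb).const_mul (1/2)).mono'
    (((he_meas a).mul (he_meas b)).aestronglyMeasurable) ?_
  filter_upwards with y
  rw [Real.norm_eq_abs, abs_mul]
  simp only [Pi.add_apply]
  nlinarith [sq_nonneg (|e a y| - |e b y|), abs_nonneg (e a y), abs_nonneg (e b y),
    abs_mul_abs_self (e a y), abs_mul_abs_self (e b y)]

lemma andreief (he_meas : ∀ m, Measurable (e m))
    (he_on : ∀ m n : ℕ, ∫ z, e m z * e n z ∂ω = if m = n then 1 else 0)
    {N : ℕ} (ρ : Fin N → ℕ) (hρ : Function.Injective ρ) :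
    Integrable (fun x : Fin N → Y => ((Matrix.of fun i j : Fin N => e (ρ i) (x j)).det)^2)
        (Measure.pi fun _ => ω) ∧
    ∫ x : Fin N → Y, ((Matrix.of fun i j : Fin N => e (ρ i) (x j)).det)^2
        ∂(Measure.pi fun _ => ω) = (N.factorial : ℝ) := by
  classical
  letI : MeasureSpace Y := ⟨ω⟩
  have hvol : (Measure.pi fun _ : Fin N => ω) = (volume : Measure (Fin N → Y)) :=
    (MeasureTheory.volume_pi).symm
  set c : Equiv.Perm (Fin N) × Equiv.Perm (Fin N) → ℝ :=
    fun p => ((Equiv.Perm.sign p.1 : ℤ) : ℝ) * ((Equiv.Perm.sign p.2 : ℤ) : ℝ) with hc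
  have hexp : ∀ x : Fin N → Y, ((Matrix.of fun i j : Fin N => e (ρ i) (x j)).det)^2
      = ∑ p : Equiv.Perm (Fin N) × Equiv.Perm (Fin N),
          c p * ∏ i, (e (ρ (p.1 i)) (x i) * e (ρ (p.2 i)) (x i)) := by
    intro x
    rw [Matrix.det_apply', sq, Finset.sum_mul_sum, ← Finset.sum_product']
    rw [show (Finset.univ ×ˢ Finset.univ :
        Finset (Equiv.Perm (Fin N) × Equiv.Perm (Fin N))) = Finset.univ from by simp]
    refine Finset.sum_congr rfl fun p _ => ?_
    rw [Finset.prod_mul_distrib]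
    simp only [Matrix.of_apply, hc]
    ring
  have hterm : ∀ p : Equiv.Perm (Fin N) × Equiv.Perm (Fin N),
      Integrable (fun x : Fin N → Y =>
        c p * ∏ i, (e (ρ (p.1 i)) (x i) * e (ρ (p.2 i)) (x i))) volume := by
    intro p
    exact (MeasureTheory.Integrable.fintype_prod
      (f := fun i y => e (ρ (p.1 i)) y * e (ρ (p.2 i)) y)
      (fun i => mul_integrable ω e he_meas he_on _ _)).const_mul _
  have he_on' : ∀ m n : ℕ, ∫ z, e m z * e n z ∂(volume : Measure Y) = if m = n then 1 else 0 :=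
    he_on
  have hval : ∀ p : Equiv.Perm (Fin N) × Equiv.Perm (Fin N),
      ∫ x : Fin N → Y, c p * ∏ i, (e (ρ (p.1 i)) (x i) * e (ρ (p.2 i)) (x i))
        = (if p.1 = p.2 then (1:ℝ) else 0) := by
    intro p
    rw [MeasureTheory.integral_const_mul,
      MeasureTheory.integral_fintype_prod_volume_eq_prod
        (f := fun i y => e (ρ (p.1 i)) y * e (ρ (p.2 i)) y)]
    by_cases hp : p.1 = p.2
    · rw [if_pos hp]
      have : ∀ i : Fin N, ∫ y : Y, e (ρ (p.1 i)) y * e (ρ (p.2 i)) y = 1 := by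
        intro i; rw [he_on', if_pos (by rw [hp])]
      rw [Finset.prod_congr rfl fun i _ => this i, Finset.prod_const_one, mul_one]
      show ((Equiv.Perm.sign p.1 : ℤ) : ℝ) * ((Equiv.Perm.sign p.2 : ℤ) : ℝ) = 1
      rw [← hp, ← Int.cast_mul, ← Units.val_mul, Int.units_mul_self]
      norm_num
    · rw [if_neg hp]
      obtain ⟨i, hi⟩ : ∃ i, p.1 i ≠ p.2 i := by
        by_contra hall
        push_neg at hall
        exact hp (Equiv.ext hall)
      have : ∫ y : Y, e (ρ (p.1 i)) y * e (ρ (p.2 i)) y = 0 := by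
        rw [he_on', if_neg (fun hcon => hi (hρ hcon))]
      rw [Finset.prod_eq_zero (Finset.mem_univ i) this, mul_zero]
  constructor
  · rw [hvol]
    rw [show (fun x : Fin N → Y => ((Matrix.of fun i j : Fin N => e (ρ i) (x j)).det)^2)
        = fun x => ∑ p : Equiv.Perm (Fin N) × Equiv.Perm (Fin N),
            c p * ∏ i, (e (ρ (p.1 i)) (x i) * e (ρ (p.2 i)) (x i)) from funext hexp]
    exact MeasureTheory.integrable_finset_sum _ fun p _ => hterm p
  · rw [hvol]
    calc ∫ x : Fin N → Y, ((Matrix.of fun i j : Fin N => e (ρ i) (x j)).det)^2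
        = ∫ x : Fin N → Y, ∑ p : Equiv.Perm (Fin N) × Equiv.Perm (Fin N),
            c p * ∏ i, (e (ρ (p.1 i)) (x i) * e (ρ (p.2 i)) (x i)) := by
          exact MeasureTheory.integral_congr_ae (Filter.Eventually.of_forall hexp)
      _ = ∑ p : Equiv.Perm (Fin N) × Equiv.Perm (Fin N),
            ∫ x : Fin N → Y, c p * ∏ i, (e (ρ (p.1 i)) (x i) * e (ρ (p.2 i)) (x i)) :=
          MeasureTheory.integral_finset_sum _ fun p _ => hterm p
      _ = ∑ p : Equiv.Perm (Fin N) × Equiv.Perm (Fin N), (if p.1 = p.2 then (1:ℝ) else 0) :=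
          Finset.sum_congr rfl fun p _ => hval p
      _ = (N.factorial : ℝ) := by
          rw [Fintype.sum_prod_type]
          simp [Finset.sum_ite_eq, Fintype.card_perm]

end Aux

section Pointwise
variable {Y : Type*} {F : Type*} [NormedAddCommGroup F] [InnerProductSpace ℝ F] [CompleteSpace F]

lemma pointwise_bound (e : ℕ → Y → ℝ) (σ : ℕ → ℝ) (hσpos : ∀ m, 0 < σ m)
    (eF : ℕ → F) (heF : Orthonormal ℝ eF)
    (heFtot : (Submodule.span ℝ (Set.range eF)).topologicalClosure = ⊤)
    (Kf : Y → F) (hKf : ∀ (z : Y) (m : ℕ), ⟪eF m, Kf z⟫ = Real.sqrt (σ m) * e m z)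
    {N : ℕ} (x : Fin N → Y) (n : Fin N) :
    HasSum
      (fun m : ℕ => σ (N + m) *
        (((Matrix.of fun i j : Fin N => e i.val (x j)).updateRow n
            (fun j => e (N + m) (x j))).det)^2)
      (σ n.val *
        ‖((Matrix.of fun i j : Fin N => e i.val (x j)).det •
            eF n.val - (Real.sqrt (σ n.val))⁻¹ •
              ∑ j, (Matrix.of fun i j : Fin N => e i.val (x j)).adjugate j n • Kf (x j))‖ ^ 2) ∧
    σ n.val *
        ‖(Submodule.orthogonalProjectionOnto (Submodule.span ℝ (Set.range fun j => Kf (x j)))ᗮ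
            (eF n.val) : F)‖ ^ 2 *
        ((Matrix.of fun i j : Fin N => e i.val (x j)).det)^2
      ≤ σ n.val *
        ‖((Matrix.of fun i j : Fin N => e i.val (x j)).det •
            eF n.val - (Real.sqrt (σ n.val))⁻¹ •
              ∑ j, (Matrix.of fun i j : Fin N => e i.val (x j)).adjugate j n • Kf (x j))‖ ^ 2 := by
  classical
  set A : Matrix (Fin N) (Fin N) ℝ := Matrix.of fun i j : Fin N => e i.val (x j) with hA
  set d : ℝ := A.det with hd
  set g : F := ∑ j, A.adjugate j n • Kf (x j) with hg
  set h : F := d • eF n.val - (Real.sqrt (σ n.val))⁻¹ • g with hh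
  set s : ℕ → ℝ := fun m => (A.updateRow n fun j => e m (x j)).det with hs
  have hsdef : ∀ m : ℕ, s m = (A.updateRow n fun j => e m (x j)).det := fun m => rfl
  have hsqrt_ne : ∀ m : ℕ, Real.sqrt (σ m) ≠ 0 := fun m =>
    (Real.sqrt_pos.2 (hσpos m)).ne'
  -- inner products with g
  have hinner_g : ∀ m : ℕ, ⟪eF m, g⟫ = Real.sqrt (σ m) * s m := by
    intro m
    rw [hg, inner_sum]
    have : ∀ j : Fin N, ⟪eF m, A.adjugate j n • Kf (x j)⟫
        = (e m (x j) * A.adjugate j n) * Real.sqrt (σ m) := by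
      intro j
      rw [real_inner_smul_right, hKf]
      ring
    rw [Finset.sum_congr rfl fun j _ => this j, ← Finset.sum_mul, hsdef,
      det_updateRow_eq_sum_adjugate]
    ring
  -- rows of A
  have hrow : ∀ m : Fin N, (fun j => e m.val (x j)) = A m := by
    intro m; funext j; simp [hA]
  have hs_small : ∀ m : ℕ, m < N → s m = if m = n.val then d else 0 := by
    intro m hm
    have : (fun j => e m (x j)) = A ⟨m, hm⟩ := hrow ⟨m, hm⟩
    by_cases hmn : m = n.val
    · rw [if_pos hmn, hsdef]
      have hmn' : (⟨m, hm⟩ : Fin N) = n := Fin.ext hmn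
      rw [this, hmn', Matrix.updateRow_eq_self]
    · rw [if_neg hmn, hsdef, this, Matrix.det_updateRow_eq_zero]
      exact fun hcon => hmn (congrArg Fin.val hcon)
  -- coefficients of h
  have hcoef : ∀ m : ℕ, ⟪eF m, h⟫
      = (if m = n.val then d else 0) - (Real.sqrt (σ n.val))⁻¹ * (Real.sqrt (σ m) * s m) := by
    intro m
    rw [hh, inner_sub_right, real_inner_smul_right, real_inner_smul_right, hinner_g]
    congr 1
    rw [orthonormal_iff_ite.mp heF m n.val]
    by_cases hmn : m = n.val <;> simp [hmn]
  have hcoef_small : ∀ m : ℕ, m < N → ⟪eF m, h⟫ = 0 := by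
    intro m hm
    rw [hcoef, hs_small m hm]
    by_cases hmn : m = n.val
    · subst hmn
      simp only [if_pos rfl]
      rw [inv_mul_cancel_left₀ (hsqrt_ne _), sub_self]
    · simp [hmn]
  have hcoef_big : ∀ m : ℕ,
      ⟪eF (N + m), h⟫ = -((Real.sqrt (σ n.val))⁻¹ * (Real.sqrt (σ (N + m)) * s (N + m))) := by
    intro m
    rw [hcoef, if_neg, zero_sub]
    have : n.val < N + m := lt_of_lt_of_le n.isLt (Nat.le_add_right N m)
    omega
  -- Parseval
  let b : HilbertBasis ℕ ℝ F := HilbertBasis.mk heF heFtot.ge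
  have hb : ∀ m : ℕ, b m = eF m := fun m => congrFun (HilbertBasis.coe_mk _ _) m
  have hParseval : HasSum (fun m => ⟪eF m, h⟫ ^ 2) (‖h‖ ^ 2) := by
    have := b.hasSum_inner_mul_inner h h
    rw [real_inner_self_eq_norm_sq] at this
    have key : (fun m => ⟪eF m, h⟫ ^ 2) = fun i => ⟪h, b i⟫ * ⟪b i, h⟫ := by
      funext m
      rw [hb, real_inner_comm, sq]
    rw [key]; exact this
  have hsum2 : HasSum (fun m => σ n.val * ⟪eF m, h⟫ ^ 2) (σ n.val * ‖h‖ ^ 2) :=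
    hParseval.mul_left _
  have hkey : ∀ m : ℕ, σ n.val * ⟪eF (N + m), h⟫ ^ 2 = σ (N + m) * s (N + m) ^ 2 := by
    intro m
    rw [hcoef_big m, neg_sq, mul_pow, mul_pow, inv_pow,
      Real.sq_sqrt (hσpos n.val).le, Real.sq_sqrt (hσpos (N + m)).le]
    rw [← mul_assoc, ← mul_assoc, mul_inv_cancel₀ (hσpos n.val).ne']
    ring
  have hsum3 : HasSum (fun m => σ (N + m) * s (N + m) ^ 2) (σ n.val * ‖h‖ ^ 2) := by
    have htail : HasSum (fun m => σ n.val * ⟪eF (m + N), h⟫ ^ 2) (σ n.val * ‖h‖ ^ 2) := by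
      refine (hasSum_nat_add_iff (f := fun m => σ n.val * ⟪eF m, h⟫ ^ 2) N).mpr ?_
      have hz : (∑ i ∈ Finset.range N, σ n.val * ⟪eF i, h⟫ ^ 2) = 0 := by
        refine Finset.sum_eq_zero fun i hi => ?_
        rw [hcoef_small i (Finset.mem_range.mp hi)]
        ring
      rw [hz, add_zero]
      exact hsum2
    have : ∀ m : ℕ, σ n.val * ⟪eF (m + N), h⟫ ^ 2 = σ (N + m) * s (N + m) ^ 2 := by
      intro m; rw [Nat.add_comm m N, hkey m]
    exact (funext this) ▸ htail
  refine ⟨hsum3, ?_⟩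
  -- projection bound
  set T : Submodule ℝ F := Submodule.span ℝ (Set.range fun j => Kf (x j)) with hT
  have hgT : g ∈ T := by
    refine Submodule.sum_mem _ fun j _ => Submodule.smul_mem _ _ ?_
    exact Submodule.subset_span ⟨j, rfl⟩
  have hproj0 : Submodule.orthogonalProjectionOnto Tᗮ g = 0 :=
    Submodule.orthogonalProjectionOnto_orthogonal_apply_eq_zero hgT
  have hdecomp : d • eF n.val = h + (Real.sqrt (σ n.val))⁻¹ • g := by
    rw [hh]; abel
  have hPh : Submodule.orthogonalProjectionOnto Tᗮ (d • eF n.val) = Submodule.orthogonalProjectionOnto Tᗮ h := by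
    rw [hdecomp, map_add, _root_.map_smul, hproj0, smul_zero, add_zero]
  have hnorm : ‖(Submodule.orthogonalProjectionOnto Tᗮ (eF n.val) : F)‖ * |d| ≤ ‖h‖ := by
    have h1 : ‖(Submodule.orthogonalProjectionOnto Tᗮ (d • eF n.val) : F)‖
        = |d| * ‖(Submodule.orthogonalProjectionOnto Tᗮ (eF n.val) : F)‖ := by
      rw [_root_.map_smul, Submodule.coe_smul, norm_smul, Real.norm_eq_abs]
    have h2 : ‖(Submodule.orthogonalProjectionOnto Tᗮ h : F)‖ ≤ ‖h‖ := by
      have := (Submodule.orthogonalProjectionOnto Tᗮ).le_opNorm h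
      calc ‖(Submodule.orthogonalProjectionOnto Tᗮ h : F)‖ = ‖Submodule.orthogonalProjectionOnto Tᗮ h‖ := rfl
        _ ≤ ‖Submodule.orthogonalProjectionOnto Tᗮ‖ * ‖h‖ := this
        _ ≤ 1 * ‖h‖ := by
            exact mul_le_mul_of_nonneg_right (Submodule.orthogonalProjectionOnto_norm_le _) (norm_nonneg h)
        _ = ‖h‖ := one_mul _
    calc ‖(Submodule.orthogonalProjectionOnto Tᗮ (eF n.val) : F)‖ * |d|
        = ‖(Submodule.orthogonalProjectionOnto Tᗮ (d • eF n.val) : F)‖ := by rw [h1]; ring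
      _ = ‖(Submodule.orthogonalProjectionOnto Tᗮ h : F)‖ := by rw [hPh]
      _ ≤ ‖h‖ := h2
  have habs : ‖(Submodule.orthogonalProjectionOnto Tᗮ (eF n.val) : F)‖ ^ 2 * d ^ 2 ≤ ‖h‖ ^ 2 := by
    have hnn : 0 ≤ ‖(Submodule.orthogonalProjectionOnto Tᗮ (eF n.val) : F)‖ * |d| :=
      mul_nonneg (norm_nonneg _) (abs_nonneg _)
    calc ‖(Submodule.orthogonalProjectionOnto Tᗮ (eF n.val) : F)‖ ^ 2 * d ^ 2
        = (‖(Submodule.orthogonalProjectionOnto Tᗮ (eF n.val) : F)‖ * |d|) ^ 2 := by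
          rw [mul_pow, sq_abs]
      _ ≤ ‖h‖ ^ 2 := by
          exact pow_le_pow_left₀ hnn hnorm 2
  calc σ n.val * ‖(Submodule.orthogonalProjectionOnto Tᗮ (eF n.val) : F)‖ ^ 2 * d ^ 2
      = σ n.val * (‖(Submodule.orthogonalProjectionOnto Tᗮ (eF n.val) : F)‖ ^ 2 * d ^ 2) := by ring
    _ ≤ σ n.val * ‖h‖ ^ 2 := by
        exact mul_le_mul_of_nonneg_left habs (hσpos n.val).le

end Pointwise

lemma measurable_det_comp {Y : Type*} [MeasurableSpace Y] (e : ℕ → Y → ℝ)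
    (he_meas : ∀ m, Measurable (e m)) {N : ℕ} (ρ : Fin N → ℕ) :
    Measurable (fun x : Fin N → Y => (Matrix.of fun i j : Fin N => e (ρ i) (x j)).det) := by
  simp only [Matrix.det_apply', Matrix.of_apply]
  refine Finset.measurable_sum _ fun p _ => ?_
  refine Measurable.const_mul ?_ _
  refine Finset.measurable_prod _ fun i _ => ?_
  exact (he_meas _).comp (measurable_pi_apply i)

/-- Under the projection DPP,
`E_DPP[max_{n∈[N]} σ_n ‖Π_{T(x)^⊥} e_n^F‖²] ≤ σ_1 ∑_{ℓ=1}^N (1/ℓ!²)(N r_N/σ_1)^ℓ`.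
(Indices are 0-based: `σ 0` is the paper's `σ_1`.) -/
theorem stmt16 {Y : Type*} [MeasurableSpace Y] (ω : Measure Y) [IsProbabilityMeasure ω]
    (e : ℕ → Y → ℝ) (he_meas : ∀ m, Measurable (e m))
    (he_on : ∀ m n : ℕ, ∫ z, e m z * e n z ∂ω = if m = n then 1 else 0)
    (σ : ℕ → ℝ) (hσpos : ∀ m, 0 < σ m) (hσanti : Antitone σ) (hσsum : Summable σ)
    (hdiag : ∀ z : Y, Summable fun m => σ m * (e m z) ^ 2)
    {F : Type*} [NormedAddCommGroup F] [InnerProductSpace ℝ F] [CompleteSpace F]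
    (eF : ℕ → F) (heF : Orthonormal ℝ eF)
    (heFtot : (Submodule.span ℝ (Set.range eF)).topologicalClosure = ⊤)
    (Kf : Y → F) (hKf : ∀ (z : Y) (m : ℕ), ⟪eF m, Kf z⟫ = Real.sqrt (σ m) * e m z)
    (N : ℕ) (hN : 0 < N)
    (rN : ℝ) (hrN : rN = ∑' m : ℕ, σ (N + m)) :
    (1 / (N.factorial : ℝ)) *
        ∫ x : Fin N → Y,
          (Finset.univ.sup' (Finset.univ_nonempty_iff.mpr ⟨⟨0, hN⟩⟩)
              (fun n : Fin N =>
                σ n.val *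
                  ‖(Submodule.orthogonalProjectionOnto (Submodule.span ℝ (Set.range fun j => Kf (x j)))ᗮ
                      (eF n.val) : F)‖ ^ 2)) *
            (Matrix.of fun i j : Fin N => e i.val (x j)).det ^ 2
          ∂(Measure.pi fun _ : Fin N => ω)
      ≤ σ 0 * ∑ ℓ ∈ Finset.Icc 1 N, (1 / (ℓ.factorial : ℝ) ^ 2) * ((N : ℝ) * rN / σ 0) ^ ℓ := by
  
  classical
  have hrN_nonneg : 0 ≤ rN := by
    rw [hrN]; exact tsum_nonneg fun m => (hσpos _).le
  set π : Measure (Fin N → Y) := Measure.pi fun _ : Fin N => ω with hπ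
  set Hne : (Finset.univ : Finset (Fin N)).Nonempty :=
    Finset.univ_nonempty_iff.mpr ⟨⟨0, hN⟩⟩ with hHne
  set f : (Fin N → Y) → ℝ := fun x =>
    (Finset.univ.sup' Hne
        (fun n : Fin N =>
          σ n.val *
            ‖(Submodule.orthogonalProjectionOnto (Submodule.span ℝ (Set.range fun j => Kf (x j)))ᗮ
                (eF n.val) : F)‖ ^ 2)) *
      (Matrix.of fun i j : Fin N => e i.val (x j)).det ^ 2 with hf
  set φ : Fin N → ℕ → (Fin N → Y) → ℝ := fun n m x =>
    σ (N + m) *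
      (((Matrix.of fun i j : Fin N => e i.val (x j)).updateRow n
          (fun j => e (N + m) (x j))).det)^2 with hφ
  -- reindexing function
  set ρ : Fin N → ℕ → Fin N → ℕ := fun n m i => if i = n then N + m else i.val with hρ
  have hρinj : ∀ n m, Function.Injective (ρ n m) := by
    intro n m i j hij
    simp only [hρ] at hij
    by_cases hi : i = n <;> by_cases hj : j = n
    · rw [hi, hj]
    · rw [if_pos hi, if_neg hj] at hij
      exact absurd hij.symm (by have := j.isLt; omega)
    · rw [if_neg hi, if_pos hj] at hij
      exact absurd hij (by have := i.isLt; omega)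
    · rw [if_neg hi, if_neg hj] at hij
      exact Fin.ext hij
  have hupd : ∀ (n : Fin N) (m : ℕ) (x : Fin N → Y),
      ((Matrix.of fun i j : Fin N => e i.val (x j)).updateRow n (fun j => e (N + m) (x j)))
        = Matrix.of fun i j : Fin N => e (ρ n m i) (x j) := by
    intro n m x
    ext i j
    rw [Matrix.updateRow_apply]
    by_cases hi : i = n <;> simp [hi, hρ]
  have handr := fun (n : Fin N) (m : ℕ) =>
    andreief ω e he_meas he_on (ρ n m) (hρinj n m)
  have hφ_nonneg : ∀ n m x, 0 ≤ φ n m x := fun n m x =>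
    mul_nonneg (hσpos _).le (sq_nonneg _)
  have hφeq : ∀ n m, φ n m
      = fun x => σ (N + m) * ((Matrix.of fun i j : Fin N => e (ρ n m i) (x j)).det)^2 := by
    intro n m
    funext x
    simp only [hφ]
    rw [hupd n m x]
  have hφ_meas : ∀ n m, Measurable (φ n m) := by
    intro n m
    rw [hφeq]
    exact (((measurable_det_comp e he_meas (ρ n m)).pow_const 2).const_mul _)
  have hφ_int : ∀ n m, Integrable (φ n m) π := by
    intro n m
    rw [hφeq]
    exact ((handr n m).1.const_mul _)
  have hφ_val : ∀ n m, ∫ x, φ n m x ∂π = σ (N + m) * (N.factorial : ℝ) := by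
    intro n m
    rw [hφeq]
    rw [MeasureTheory.integral_const_mul, (handr n m).2]
  -- pointwise bound and summability
  have hptn := fun (x : Fin N → Y) (n : Fin N) =>
    pointwise_bound e σ hσpos eF heF heFtot Kf hKf x n
  have hsummφ : ∀ x n, Summable (fun m => φ n m x) := fun x n => (hptn x n).1.summable
  have htsum_nonneg : ∀ x n, 0 ≤ ∑' m, φ n m x := fun x n =>
    tsum_nonneg fun m => hφ_nonneg n m x
  have hf_nonneg : ∀ x, 0 ≤ f x := by
    intro x
    refine mul_nonneg ?_ (sq_nonneg _)
    refine le_trans ?_ (Finset.le_sup' _ (Finset.mem_univ (⟨0, hN⟩ : Fin N)))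
    exact mul_nonneg (hσpos _).le (sq_nonneg _)
  have hpt : ∀ x, f x ≤ ∑ n : Fin N, ∑' m, φ n m x := by
    intro x
    obtain ⟨n₀, -, hsup⟩ := Finset.exists_mem_eq_sup' Hne
      (fun n : Fin N =>
        σ n.val *
          ‖(Submodule.orthogonalProjectionOnto (Submodule.span ℝ (Set.range fun j => Kf (x j)))ᗮ
              (eF n.val) : F)‖ ^ 2)
    have hb1 : f x ≤ ∑' m, φ n₀ m x := by
      simp only [hf]
      rw [hsup]
      calc σ n₀.val *
            ‖(Submodule.orthogonalProjectionOnto (Submodule.span ℝ (Set.range fun j => Kf (x j)))ᗮ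
                (eF n₀.val) : F)‖ ^ 2 *
            (Matrix.of fun i j : Fin N => e i.val (x j)).det ^ 2
          ≤ _ := (hptn x n₀).2
        _ = ∑' m, φ n₀ m x := ((hptn x n₀).1.tsum_eq).symm
    exact hb1.trans (Finset.single_le_sum (fun n _ => htsum_nonneg x n) (Finset.mem_univ n₀))
  -- pass to lintegral
  have step1 : ∫ x, f x ∂π ≤ (∫⁻ x, ENNReal.ofReal (f x) ∂π).toReal := by
    by_cases hfi : Integrable f π
    · rw [← MeasureTheory.ofReal_integral_eq_lintegral_ofReal hfi
        (Filter.Eventually.of_forall hf_nonneg),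
        ENNReal.toReal_ofReal (MeasureTheory.integral_nonneg hf_nonneg)]
    · rw [MeasureTheory.integral_undef hfi]
      exact ENNReal.toReal_nonneg
  have step2 : ∫⁻ x, ENNReal.ofReal (f x) ∂π
      ≤ ENNReal.ofReal ((N : ℝ) * (rN * (N.factorial : ℝ))) := by
    have hptE : ∀ x, ENNReal.ofReal (f x)
        ≤ ∑ n : Fin N, ∑' m, ENNReal.ofReal (φ n m x) := by
      intro x
      refine le_trans (ENNReal.ofReal_le_ofReal (hpt x)) ?_
      rw [ENNReal.ofReal_sum_of_nonneg fun n _ => htsum_nonneg x n]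
      refine Finset.sum_le_sum fun n _ => ?_
      rw [ENNReal.ofReal_tsum_of_nonneg (fun m => hφ_nonneg n m x) (hsummφ x n)]
    calc ∫⁻ x, ENNReal.ofReal (f x) ∂π
        ≤ ∫⁻ x, ∑ n : Fin N, ∑' m, ENNReal.ofReal (φ n m x) ∂π :=
          MeasureTheory.lintegral_mono hptE
      _ = ∑ n : Fin N, ∫⁻ x, ∑' m, ENNReal.ofReal (φ n m x) ∂π := by
          refine MeasureTheory.lintegral_finset_sum _ fun n _ => ?_
          exact Measurable.ennreal_tsum fun m => (hφ_meas n m).ennreal_ofReal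
      _ = ∑ n : Fin N, ∑' m, ∫⁻ x, ENNReal.ofReal (φ n m x) ∂π := by
          refine Finset.sum_congr rfl fun n _ => ?_
          exact MeasureTheory.lintegral_tsum fun m =>
            ((hφ_meas n m).ennreal_ofReal).aemeasurable
      _ = ∑ n : Fin N, ∑' m, ENNReal.ofReal (σ (N + m) * (N.factorial : ℝ)) := by
          refine Finset.sum_congr rfl fun n _ => ?_
          congr 1
          funext m
          rw [← MeasureTheory.ofReal_integral_eq_lintegral_ofReal (hφ_int n m)
            (Filter.Eventually.of_forall fun x => hφ_nonneg n m x), hφ_val n m]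
      _ = ENNReal.ofReal ((N : ℝ) * (rN * (N.factorial : ℝ))) := by
          have hsummul : Summable fun m => σ (N + m) * (N.factorial : ℝ) := by
            have : Summable fun m => σ (m + N) := (summable_nat_add_iff N).mpr hσsum
            exact ((funext fun m => congrArg σ (Nat.add_comm m N)) ▸ this).mul_right _
          have h1 : (∑' m, ENNReal.ofReal (σ (N + m) * (N.factorial : ℝ)))
              = ENNReal.ofReal (rN * (N.factorial : ℝ)) := by
            rw [← ENNReal.ofReal_tsum_of_nonneg
              (fun m => mul_nonneg (hσpos _).le (Nat.cast_nonneg _)) hsummul,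
              tsum_mul_right, hrN]
          rw [Finset.sum_congr rfl fun n _ => h1, Finset.sum_const, Finset.card_univ,
            Fintype.card_fin, nsmul_eq_mul]
          rw [← ENNReal.ofReal_natCast N, ← ENNReal.ofReal_mul (Nat.cast_nonneg N)]
  have step3 : ∫ x, f x ∂π ≤ (N : ℝ) * (rN * (N.factorial : ℝ)) := by
    refine step1.trans ?_
    calc (∫⁻ x, ENNReal.ofReal (f x) ∂π).toReal
        ≤ (ENNReal.ofReal ((N : ℝ) * (rN * (N.factorial : ℝ)))).toReal := by
          refine ENNReal.toReal_mono ENNReal.ofReal_ne_top step2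
      _ = (N : ℝ) * (rN * (N.factorial : ℝ)) := by
          rw [ENNReal.toReal_ofReal]
          positivity
  -- conclude
  have hfact_pos : (0:ℝ) < (N.factorial : ℝ) := by exact_mod_cast N.factorial_pos
  have hmain : (1 / (N.factorial : ℝ)) * ∫ x, f x ∂π ≤ (N : ℝ) * rN := by
    calc (1 / (N.factorial : ℝ)) * ∫ x, f x ∂π
        ≤ (1 / (N.factorial : ℝ)) * ((N : ℝ) * (rN * (N.factorial : ℝ))) := by
          exact mul_le_mul_of_nonneg_left step3 (one_div_nonneg.mpr hfact_pos.le)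
      _ = (N : ℝ) * rN := by field_simp
  refine hmain.trans ?_
  have h1mem : 1 ∈ Finset.Icc 1 N := Finset.mem_Icc.mpr ⟨le_refl 1, hN⟩
  have hterm_nonneg : ∀ ℓ ∈ Finset.Icc 1 N,
      0 ≤ (1 / (ℓ.factorial : ℝ) ^ 2) * ((N : ℝ) * rN / σ 0) ^ ℓ := by
    intro ℓ _
    have h : (0:ℝ) ≤ (N : ℝ) * rN / σ 0 :=
      div_nonneg (mul_nonneg (Nat.cast_nonneg N) hrN_nonneg) (hσpos 0).le
    exact mul_nonneg (by positivity) (pow_nonneg h ℓ)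
  have hsingle : (1 / ((1:ℕ).factorial : ℝ) ^ 2) * ((N : ℝ) * rN / σ 0) ^ 1
      ≤ ∑ ℓ ∈ Finset.Icc 1 N, (1 / (ℓ.factorial : ℝ) ^ 2) * ((N : ℝ) * rN / σ 0) ^ ℓ :=
    Finset.single_le_sum hterm_nonneg h1mem
  have h0 : (σ 0) * ((1 / ((1:ℕ).factorial : ℝ) ^ 2) * ((N : ℝ) * rN / σ 0) ^ 1)
      = (N : ℝ) * rN := by
    rw [Nat.factorial_one, Nat.cast_one, one_pow, pow_one]
    field_simp
    exact mul_div_cancel_left₀ _ (hσpos 0).ne'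
  calc (N : ℝ) * rN = (σ 0) * ((1 / ((1:ℕ).factorial : ℝ) ^ 2) * ((N : ℝ) * rN / σ 0) ^ 1) :=
        h0.symm
    _ ≤ σ 0 * ∑ ℓ ∈ Finset.Icc 1 N, (1 / (ℓ.factorial : ℝ) ^ 2) * ((N : ℝ) * rN / σ 0) ^ ℓ :=
        mul_le_mul_of_nonneg_left hsingle (hσpos 0).le
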